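/- arXiv:1807.09450 — 6 statements merged into one kernel-verified Lean document; each statement's English description precedes it below -/
import Mathlib

section
/- Let H be a finite-dimensional involutory Hopf algebra over a field k, and let Λ₀ ∈ H be the element defined by ⟨h*, Λ₀⟩ = Tr(L(h*)) for all h* ∈ H*. Then Λ₀ is a left integral of H, i.e. h·Λ₀ = ε(h)·Λ₀ for all h ∈ H. -/
open scoped TensorProduct

/-- The convolution product on the dual `H* = Hom_k(H, k)` of a coalgebra `H`:
`(f * g)(h) = ∑ f(h₁) g(h₂)`. -/
noncomputable def convMul (k H : Type*) [CommSemiring k] [AddCommMonoid H] [Module k H]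
    [CoalgebraStruct k H] (f g : Module.Dual k H) : Module.Dual k H :=
  LinearMap.mul' k k ∘ₗ TensorProduct.map f g ∘ₗ Coalgebra.comul

/-- Left multiplication `L(f) : H* → H*, g ↦ f * g` by `f` in the convolution algebra `H*`,
as a `k`-linear endomorphism of `H*`. -/
noncomputable def convL (k H : Type*) [CommSemiring k] [AddCommMonoid H] [Module k H]
    [CoalgebraStruct k H] (f : Module.Dual k H) :
    Module.Dual k H →ₗ[k] Module.Dual k H where
  toFun g := convMul k H f g
  map_add' g₁ g₂ := by
    simp only [convMul, TensorProduct.map_add_right, LinearMap.add_comp, LinearMap.comp_add]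
  map_smul' c g := by
    simp only [convMul, TensorProduct.map_smul_right, LinearMap.smul_comp, LinearMap.comp_smul,
      RingHom.id_apply]

section AuxiliaryLemmas

open TensorProduct Coalgebra HopfAlgebra LinearMap
section
variable {R A : Type*} [CommSemiring R] [Semiring A] [HopfAlgebra R A]

lemma sum_counit_smul_right' {ι : Type*} {a : A} (r : Repr R a ι) :
    ∑ i ∈ r.index, counit (R := R) (r.left i) • r.right i = a := by
  have h := congrArg (TensorProduct.lid R A) (sum_counit_tmul_eq (R := R) r)
  simp only [map_sum, TensorProduct.lid_tmul] at h
  exact h.trans (one_smul R a)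

lemma sum_counit_smul_left' {ι : Type*} {a : A} (r : Repr R a ι) :
    ∑ i ∈ r.index, counit (R := R) (r.right i) • r.left i = a := by
  have h := congrArg (TensorProduct.rid R A) (sum_tmul_counit_eq (R := R) r)
  simp only [map_sum, TensorProduct.rid_tmul] at h
  exact h.trans (one_smul R a)

/-- collapse `∑ S(c₁) * (c₂ * Z) = ε(c) • Z` -/
lemma sum_antipode_mul_mul {ι : Type*} {c : A} (r : Repr R c ι) (Z : A) :
    ∑ p ∈ r.index, antipode (R := R) (r.left p) * (r.right p * Z)
      = counit (R := R) c • Z := by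
  calc ∑ p ∈ r.index, antipode (R := R) (r.left p) * (r.right p * Z)
      = (∑ p ∈ r.index, antipode (R := R) (r.left p) * r.right p) * Z := by
        rw [Finset.sum_mul]; simp [mul_assoc]
    _ = (counit (R := R) c • (1 : A)) * Z := by rw [sum_antipode_mul_eq_smul]
    _ = counit (R := R) c • Z := by simp [smul_mul_assoc]

/-- The master coassociativity/antipode collapse lemma:
`∑ S(a₁) * (a₂ * g (a₃)) = g a`. -/
lemma sum_antipode_mul_map {ι : Type*} {κ : ι → Type*} {a : A} (ra : Repr R a ι) (rra : ∀ i, Repr R (ra.right i) (κ i))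
    (g : A →ₗ[R] A) :
    ∑ i ∈ ra.index, ∑ p ∈ (rra i).index,
      antipode (R := R) (ra.left i) * ((rra i).left p * g ((rra i).right p)) = g a := by
  classical
  set S : A →ₗ[R] A := antipode (R := R) with hS
  let rla : ∀ i, Repr R (ra.left i) (A × A) := fun i => ℛ R (ra.left i)
  have h := (sum_tmul_tmul_eq (R := R) ra rla rra).symm
  let Θ : A ⊗[R] (A ⊗[R] A) →ₗ[R] A :=
    mul' R A ∘ₗ lTensor A (mul' R A) ∘ₗ map S (map LinearMap.id g)
  have h2 := congrArg Θ h
  simp only [map_sum, Θ, coe_comp, Function.comp_apply, map_tmul, lTensor_tmul,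
    mul'_apply, id_coe, id_eq] at h2
  -- h2 : ∑ i ∑ p, S (ra.left i) * ((rra i).left p * g ((rra i).right p))
  --    = ∑ i ∑ p, S ((rla i).left p) * ((rla i).right p * g (ra.right i))
  rw [h2]
  have h3 : ∀ i ∈ ra.index, ∑ p ∈ (rla i).index,
      S ((rla i).left p) * ((rla i).right p * g (ra.right i))
        = counit (R := R) (ra.left i) • g (ra.right i) := fun i _ =>
    sum_antipode_mul_mul (rla i) _
  rw [Finset.sum_congr rfl h3]
  simp_rw [← map_smul]
  rw [← map_sum, sum_counit_smul_right' ra]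

lemma antipode_one'' : antipode (R := R) (1 : A) = 1 := by
  simpa [Algebra.TensorProduct.one_def] using mul_antipode_rTensor_comul_apply (R := R) (1 : A)

end

section anti
variable {R A : Type*} [CommSemiring R] [Semiring A] [HopfAlgebra R A]

noncomputable def Coalgebra.Repr.mulRepr {ι κ : Type*} {a b : A} (u : Repr R a ι) (v : Repr R b κ) :
    Repr R (a * b) (ι × κ) where
  index := u.index ×ˢ v.index
  left p := u.left p.1 * v.left p.2
  right p := u.right p.1 * v.right p.2
  eq := by
    rw [Bialgebra.comul_mul, ← u.eq, ← v.eq, Finset.sum_mul_sum, Finset.sum_product]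
    simp [Algebra.TensorProduct.tmul_mul_tmul]

lemma antipode_mul_antidistrib (a b : A) :
    antipode (R := R) (a * b) = antipode (R := R) b * antipode (R := R) a := by
  classical
  set S : A →ₗ[R] A := antipode (R := R) with hS
  let ra := ℛ R a; let rb := ℛ R b
  let rra : ∀ i, Repr R (ra.right i) (A × A) := fun i => ℛ R (ra.right i)
  let rrb : ∀ j, Repr R (rb.right j) (A × A) := fun j => ℛ R (rb.right j)
  have hb : S b = ∑ j ∈ rb.index, counit (R := R) (rb.right j) • S (rb.left j) := by
    conv_lhs => rw [← sum_counit_smul_left' rb]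
    rw [map_sum]; simp
  have ha : S a = ∑ i ∈ ra.index, counit (R := R) (ra.right i) • S (ra.left i) := by
    conv_lhs => rw [← sum_counit_smul_left' ra]
    rw [map_sum]; simp
  have key : ∀ j ∈ rb.index, ∀ i ∈ ra.index,
      (counit (R := R) (rb.right j) • S (rb.left j)) *
        (counit (R := R) (ra.right i) • S (ra.left i)) =
      ∑ p ∈ (rra i).index, ∑ q ∈ (rrb j).index,
        S (rb.left j) * (S (ra.left i) * ((rra i).left p *
          ((rrb j).left q * S ((rra i).right p * (rrb j).right q)))) := by
    intro j _ i _
    have h1 : (counit (R := R) (rb.right j) • S (rb.left j)) *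
        (counit (R := R) (ra.right i) • S (ra.left i)) =
        (S (rb.left j) * S (ra.left i)) *
          (counit (R := R) (ra.right i * rb.right j) • (1 : A)) := by
      rw [Bialgebra.counit_mul]
      simp [smul_mul_assoc, mul_smul_comm, smul_smul, mul_comm]
    rw [h1, ← sum_mul_antipode_eq_smul ((rra i).mulRepr (rrb j))]
    show (S (rb.left j) * S (ra.left i)) *
      ∑ pq ∈ (rra i).index ×ˢ (rrb j).index, _ = _
    rw [Finset.sum_product]
    simp only [Coalgebra.Repr.mulRepr, Finset.mul_sum]
    simp [mul_assoc]
    rfl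
  have masterA : ∀ (j : rb.ι) (q : (rrb j).ι),
      ∑ i ∈ ra.index, ∑ p ∈ (rra i).index,
        S (ra.left i) * ((rra i).left p *
          ((rrb j).left q * S ((rra i).right p * (rrb j).right q)))
      = (rrb j).left q * S (a * (rrb j).right q) := by
    intro j q
    have := sum_antipode_mul_map (R := R) ra rra
      (mulLeft R ((rrb j).left q) ∘ₗ S ∘ₗ mulRight R ((rrb j).right q))
    simpa only [coe_comp, Function.comp_apply, mulLeft_apply, mulRight_apply] using this
  have masterB :
      ∑ j ∈ rb.index, ∑ q ∈ (rrb j).index,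
        S (rb.left j) * ((rrb j).left q * S (a * (rrb j).right q))
      = S (a * b) := by
    have := sum_antipode_mul_map (R := R) rb rrb (S ∘ₗ mulLeft R a)
    simpa only [coe_comp, Function.comp_apply, mulLeft_apply] using this
  have main : S b * S a = S (a * b) := by
    calc S b * S a
        = ∑ j ∈ rb.index, ∑ i ∈ ra.index,
            (counit (R := R) (rb.right j) • S (rb.left j)) *
              (counit (R := R) (ra.right i) • S (ra.left i)) := by
          rw [hb, ha, Finset.sum_mul_sum]
      _ = ∑ j ∈ rb.index, ∑ i ∈ ra.index, ∑ p ∈ (rra i).index, ∑ q ∈ (rrb j).index,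
            S (rb.left j) * (S (ra.left i) * ((rra i).left p *
              ((rrb j).left q * S ((rra i).right p * (rrb j).right q)))) :=
          Finset.sum_congr rfl fun j hj => Finset.sum_congr rfl fun i hi => key j hj i hi
      _ = ∑ j ∈ rb.index, ∑ q ∈ (rrb j).index, ∑ i ∈ ra.index, ∑ p ∈ (rra i).index,
            S (rb.left j) * (S (ra.left i) * ((rra i).left p *
              ((rrb j).left q * S ((rra i).right p * (rrb j).right q)))) :=
          Finset.sum_congr rfl fun j hj =>
            (Finset.sum_congr rfl fun i hi => Finset.sum_comm).trans Finset.sum_comm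
      _ = ∑ j ∈ rb.index, ∑ q ∈ (rrb j).index,
            S (rb.left j) * ((rrb j).left q * S (a * (rrb j).right q)) := by
          refine Finset.sum_congr rfl fun j hj => Finset.sum_congr rfl fun q hq => ?_
          simp_rw [← Finset.mul_sum]
          congr 1
          rw [← masterA j q]
          simp_rw [Finset.mul_sum]
      _ = S (a * b) := masterB
  exact main.symm

end anti

section invol
variable {R A : Type*} [CommSemiring R] [Semiring A] [HopfAlgebra R A]

lemma sum_antipode_right_mul_left
    (hinv : ∀ x : A, antipode (R := R) (antipode (R := R) x) = x)
    {ι : Type*} {c : A} (r : Repr R c ι) :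
    ∑ i ∈ r.index, antipode (R := R) (r.right i) * r.left i
      = counit (R := R) c • (1 : A) := by
  calc ∑ i ∈ r.index, antipode (R := R) (r.right i) * r.left i
      = ∑ i ∈ r.index, antipode (R := R) (antipode (R := R) (r.left i) * r.right i) := by
        refine Finset.sum_congr rfl fun i _ => ?_
        rw [_root_.antipode_mul_antidistrib, hinv]
    _ = antipode (R := R) (∑ i ∈ r.index, antipode (R := R) (r.left i) * r.right i) := by
        rw [map_sum]
    _ = antipode (R := R) ((counit (R := R) c • (1 : A))) := by rw [sum_antipode_mul_eq_smul]
    _ = counit (R := R) c • (1 : A) := by rw [map_smul, antipode_one'']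

end invol

section main
variable {k H : Type*} [Field k] [Ring H] [HopfAlgebra k H]

/-- `T g = (g ⊗ id) ∘ Δ : H → H`, the operator whose transpose is `convL g`. -/
noncomputable def Tmap (g : Module.Dual k H) : H →ₗ[k] H :=
  (TensorProduct.lid k H).toLinearMap ∘ₗ map g LinearMap.id ∘ₗ comul

lemma convL_eq_transpose (g : Module.Dual k H) :
    convL k H g = Module.Dual.transpose (R := k) (Tmap g) := by
  apply LinearMap.ext; intro φ
  apply LinearMap.ext; intro x
  show convMul k H g φ x = _
  rw [Module.Dual.transpose_apply]
  simp only [_root_.convMul, Tmap, coe_comp, Function.comp_apply, LinearEquiv.coe_coe]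
  induction (comul (R := k) x) using TensorProduct.induction_on with
  | zero => simp
  | tmul a b => simp [smul_eq_mul]
  | add u v hu hv => simp_all [map_add]

end main

section main2
variable {k H : Type*} [Field k] [Ring H] [HopfAlgebra k H]

lemma Tmap_comp_mulLeft
    (hinv : ∀ x : H, antipode (R := k) (antipode (R := k) x) = x)
    {ι : Type*} (f : Module.Dual k H) (h : H) (r : Repr k h ι) :
    Tmap (f ∘ₗ mulLeft k h) = ∑ i ∈ r.index,
      mulLeft k (antipode (R := k) (r.right i)) ∘ₗ Tmap f ∘ₗ mulLeft k (r.left i) := by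
  classical
  set S : H →ₗ[k] H := antipode (R := k) with hS
  let rl : ∀ i, Repr k (r.left i) (H × H) := fun i => ℛ k (r.left i)
  let rr : ∀ i, Repr k (r.right i) (H × H) := fun i => ℛ k (r.right i)
  apply LinearMap.ext; intro x
  set s := ℛ k x with hs
  let ψ : H ⊗[k] H →ₗ[k] H :=
    mul' k H ∘ₗ map S LinearMap.id ∘ₗ (TensorProduct.comm k H H).toLinearMap
  let χ : H ⊗[k] H →ₗ[k] H :=
    (TensorProduct.lid k H).toLinearMap ∘ₗ map f LinearMap.id ∘ₗ
      mulRight k (comul (R := k) x)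
  let Θ : H ⊗[k] (H ⊗[k] H) →ₗ[k] H := χ ∘ₗ lTensor H ψ
  have hΘ : ∀ (u v w : H), Θ (u ⊗ₜ (v ⊗ₜ w))
      = ∑ j ∈ s.index, f (u * s.left j) • ((S w * v) * s.right j) := by
    intro u v w
    simp only [Θ, χ, ψ, coe_comp, Function.comp_apply, lTensor_tmul, LinearEquiv.coe_coe,
      comm_tmul, map_tmul, mul'_apply, mulRight_apply, id_coe, id_eq]
    rw [← s.eq, Finset.mul_sum, map_sum, map_sum]
    simp [Algebra.TensorProduct.tmul_mul_tmul]
  have lhs_eq : Tmap (f ∘ₗ mulLeft k h) x = ∑ j ∈ s.index, f (h * s.left j) • s.right j := by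
    simp only [Tmap, coe_comp, Function.comp_apply, LinearEquiv.coe_coe]
    rw [← s.eq, map_sum, map_sum]
    simp [mulLeft_apply]
  have rhs_eq1 : ∀ i : r.ι, (mulLeft k (S (r.right i)) ∘ₗ Tmap f ∘ₗ mulLeft k (r.left i)) x
      = ∑ p ∈ (rl i).index, Θ ((rl i).left p ⊗ₜ ((rl i).right p ⊗ₜ r.right i)) := by
    intro i
    simp only [comp_apply, mulLeft_apply]
    have hTf : Tmap f (r.left i * x) = ∑ p ∈ (rl i).index, ∑ j ∈ s.index,
        f ((rl i).left p * s.left j) • ((rl i).right p * s.right j) := by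
      simp only [Tmap, coe_comp, Function.comp_apply, LinearEquiv.coe_coe]
      rw [Bialgebra.comul_mul, ← (rl i).eq, ← s.eq, Finset.sum_mul_sum]
      rw [map_sum, map_sum]
      simp [Algebra.TensorProduct.tmul_mul_tmul, Finset.sum_congr]
    rw [hTf]
    simp only [hΘ]
    rw [Finset.mul_sum]
    refine Finset.sum_congr rfl fun p _ => ?_
    rw [Finset.mul_sum]
    refine Finset.sum_congr rfl fun j _ => ?_
    rw [mul_smul_comm, mul_assoc]
  rw [LinearMap.sum_apply, Finset.sum_congr rfl (fun i _ => rhs_eq1 i), lhs_eq]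
  simp_rw [← map_sum]
  rw [sum_tmul_tmul_eq r rl rr]
  rw [map_sum]
  simp_rw [map_sum, hΘ]
  -- now: ∑ j f(h*xⱼᴸ)•xⱼᴿ = ∑ i ∑ q ∑ j, f (r.left i * xⱼᴸ) • ((S ((rr i).right q) * (rr i).left q) * xⱼᴿ)
  have collapse : ∀ i : r.ι, ∑ q ∈ (rr i).index, ∑ j ∈ s.index,
      f (r.left i * s.left j) • ((S ((rr i).right q) * (rr i).left q) * s.right j)
      = ∑ j ∈ s.index, counit (R := k) (r.right i) • (f (r.left i * s.left j) • s.right j) := by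
    intro i
    rw [Finset.sum_comm]
    refine Finset.sum_congr rfl fun j _ => ?_
    rw [← Finset.smul_sum, ← Finset.sum_mul, sum_antipode_right_mul_left hinv (rr i),
      smul_mul_assoc, one_mul, smul_comm]
  rw [Finset.sum_congr rfl (fun i _ => collapse i), Finset.sum_comm]
  refine Finset.sum_congr rfl fun j _ => ?_
  -- ∑ i, ε(r.right i) • (f (r.left i * xⱼᴸ) • xⱼᴿ) = f (h * xⱼᴸ) • xⱼᴿ
  have : ∀ i : r.ι, counit (R := k) (r.right i) • (f (r.left i * s.left j) • s.right j)
      = (f ((counit (R := k) (r.right i) • r.left i) * s.left j)) • s.right j := by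
    intro i
    rw [smul_mul_assoc, map_smul, smul_eq_mul, smul_smul]
  rw [Finset.sum_congr rfl (fun i _ => this i), ← Finset.sum_smul]
  congr 1
  rw [← map_sum, ← Finset.sum_mul, sum_counit_smul_left' r]

end main2

section main3
variable {k H : Type*} [Field k] [Ring H] [HopfAlgebra k H] [FiniteDimensional k H]

lemma trace_Tmap_mulLeft
    (hinv : ∀ x : H, antipode (R := k) (antipode (R := k) x) = x)
    (f : Module.Dual k H) (h : H) :
    trace k H (Tmap (f ∘ₗ mulLeft k h)) = counit (R := k) h * trace k H (Tmap f) := by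
  classical
  set S : H →ₗ[k] H := antipode (R := k) with hS
  let r := ℛ k h
  rw [Tmap_comp_mulLeft hinv f h r, map_sum]
  have step : ∀ i : r.ι,
      trace k H (mulLeft k (S (r.right i)) ∘ₗ Tmap f ∘ₗ mulLeft k (r.left i))
      = trace k H (Tmap f ∘ₗ mulLeft k (r.left i * S (r.right i))) := by
    intro i
    rw [show mulLeft k (S (r.right i)) ∘ₗ Tmap f ∘ₗ mulLeft k (r.left i)
        = mulLeft k (S (r.right i)) * (Tmap f ∘ₗ mulLeft k (r.left i)) from rfl,
      trace_mul_comm]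
    congr 1
    rw [Module.End.mul_eq_comp, comp_assoc, ← mulLeft_mul]
  rw [Finset.sum_congr rfl (fun i _ => step i)]
  have hsum : ∑ i ∈ r.index, (Tmap f ∘ₗ mulLeft k (r.left i * S (r.right i)))
      = Tmap f ∘ₗ mulLeft k (∑ i ∈ r.index, r.left i * S (r.right i)) := by
    apply LinearMap.ext; intro y
    simp only [coe_comp, Function.comp_apply, LinearMap.sum_apply, mulLeft_apply]
    rw [← map_sum]
    congr 1
    rw [← Finset.sum_mul]
  rw [← map_sum, hsum, sum_mul_antipode_eq_smul r]
  have hid : Tmap f ∘ₗ mulLeft k ((counit (R := k) h : k) • (1 : H))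
      = counit (R := k) h • Tmap f := by
    apply LinearMap.ext; intro y
    simp [smul_mul_assoc]
  rw [hid, map_smul, smul_eq_mul]

end main3

end AuxiliaryLemmas

open TensorProduct Coalgebra HopfAlgebra LinearMap in
/-- Let `H` be a finite-dimensional involutory Hopf algebra over `k`, and let
`Λ₀ ∈ H` be the element defined by `⟨f, Λ₀⟩ = Tr(L(f))` for all `f ∈ H*`.  Then `Λ₀` is a left
integral of `H`: `h * Λ₀ = ε(h) • Λ₀` for all `h ∈ H`. -/
theorem integral_of_trace_left_convolution
    {k H : Type*} [Field k] [Ring H] [HopfAlgebra k H] [FiniteDimensional k H]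
    (hinv : ∀ h : H, HopfAlgebra.antipode (R := k) (HopfAlgebra.antipode (R := k) h) = h)
    (Λ₀ : H)
    (hΛ : ∀ f : Module.Dual k H, f Λ₀ = LinearMap.trace k (Module.Dual k H) (convL k H f)) :
    ∀ h : H, h * Λ₀ = Coalgebra.counit (R := k) h • Λ₀ := by
  intro h
  rw [← sub_eq_zero]
  apply (Module.forall_dual_apply_eq_zero_iff k _).mp
  intro f
  rw [map_sub, sub_eq_zero]
  calc f (h * Λ₀) = (f ∘ₗ mulLeft k h) Λ₀ := rfl
    _ = trace k _ (convL k H (f ∘ₗ mulLeft k h)) := hΛ _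
    _ = trace k H (Tmap (f ∘ₗ mulLeft k h)) := by rw [convL_eq_transpose, trace_transpose']
    _ = counit (R := k) h * trace k H (Tmap f) := trace_Tmap_mulLeft hinv f h
    _ = counit (R := k) h * trace k _ (convL k H f) := by rw [convL_eq_transpose, trace_transpose']
    _ = counit (R := k) h * f Λ₀ := by rw [hΛ]
    _ = f (counit (R := k) h • Λ₀) := by rw [map_smul, smul_eq_mul]
end

section
/- Let H be a finite-dimensional involutory Hopf algebra over a field k. Suppose there are finitely many multiplicative matrices D^{(1)}, D^{(2)}, …, D^{(m)} over H, of sizes r_1 × r_1, …, r_m × r_m, with D^{(1)} = (1_H) the 1×1 matrix whose only entry is the identity of H (so r_1 = 1), such that the entries of D^{(1)}, …, D^{(m)} taken together form a basis of H. Let Λ₀ ∈ H be the element defined by ⟨h*, Λ₀⟩ = Tr(L(h*)) for all h* ∈ H*, and for each l let t_l denote the sum of the diagonal entries of D^{(l)}. Then Λ₀ = Σ_{l=1}^m r_l · t_l = 1_H + Σ_{l=2}^m r_l · t_l. -/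
open scoped TensorProduct

/-- A square matrix `G` over a coalgebra `H` is *multiplicative* if
`Δ(g_{ij}) = ∑ l, g_{il} ⊗ g_{lj}` and `ε(g_{ij}) = δ_{ij}`. -/
def IsMultiplicativeMatrix (k : Type*) {H n : Type*} [CommSemiring k] [AddCommMonoid H]
    [Module k H] [CoalgebraStruct k H] [Fintype n] [DecidableEq n]
    (G : Matrix n n H) : Prop :=
  (∀ i j, Coalgebra.comul (R := k) (G i j) = ∑ l, G i l ⊗ₜ[k] G l j) ∧
  (∀ i j, Coalgebra.counit (R := k) (G i j) = if i = j then 1 else 0)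

/-- Let `H` be a finite-dimensional involutory Hopf algebra over `k`.  Suppose
`D 0, D 1, …` are finitely many multiplicative matrices over `H`, of sizes `r l × r l`, with
`D 0 = (1_H)` the `1 × 1` matrix with entry `1`, whose entries taken together form a basis of
`H`.  Let `Λ₀` be defined by `⟨f, Λ₀⟩ = Tr(L(f))` for all `f ∈ H*`, and let `t l` denote the
trace (sum of the diagonal entries) of `D l`.  Then `Λ₀ = ∑ l, r l • t l
= 1 + ∑_{l ≠ 0} r l • t l`. -/
theorem trace_integral_eq_sum_multiplicative_traces
    {k H : Type*} [Field k] [Ring H] [HopfAlgebra k H] [FiniteDimensional k H]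
    (hinv : ∀ h : H, HopfAlgebra.antipode (R := k) (HopfAlgebra.antipode (R := k) h) = h)
    (m : ℕ) [NeZero m] (r : Fin m → ℕ)
    (D : ∀ l : Fin m, Matrix (Fin (r l)) (Fin (r l)) H)
    (hmul : ∀ l, IsMultiplicativeMatrix k (D l))
    (hr0 : r 0 = 1) (hD0 : ∀ i j, D 0 i j = 1)
    (b : Module.Basis (Σ l : Fin m, Fin (r l) × Fin (r l)) k H)
    (hb : ∀ (l : Fin m) (i j : Fin (r l)), b ⟨l, (i, j)⟩ = D l i j)
    (Λ₀ : H)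
    (hΛ : ∀ f : Module.Dual k H, f Λ₀ = LinearMap.trace k (Module.Dual k H) (convL k H f)) :
    Λ₀ = ∑ l, r l • (∑ i, D l i i) ∧
    Λ₀ = 1 + ∑ l ∈ Finset.univ.erase (0 : Fin m), r l • (∑ i, D l i i) := by
  classical
  have hkey : ∀ f : Module.Dual k H,
      LinearMap.trace k (Module.Dual k H) (convL k H f)
        = f (∑ l, r l • (∑ i, D l i i)) := by
    intro f
    rw [LinearMap.trace_eq_matrix_trace k b.dualBasis, Matrix.trace]
    have hdiag : ∀ p : Σ l : Fin m, Fin (r l) × Fin (r l),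
        Matrix.diag (LinearMap.toMatrix b.dualBasis b.dualBasis (convL k H f)) p
          = f (D p.1 p.2.1 p.2.1) := by
      rintro ⟨l, i, j⟩
      rw [Matrix.diag, LinearMap.toMatrix_apply, Module.Basis.dualBasis_repr]
      show convMul k H f (b.dualBasis ⟨l, (i, j)⟩) (b ⟨l, (i, j)⟩) = f (D l i i)
      rw [hb]
      simp only [convMul, LinearMap.comp_apply, (hmul l).1, map_sum, TensorProduct.map_tmul,
        LinearMap.mul'_apply]
      have : ∀ s : Fin (r l), b.repr (D l s j) ⟨l, (i, j)⟩
          = if s = i then 1 else 0 := by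
        intro s
        rw [← hb, b.repr_self, Finsupp.single_apply]
        by_cases hsi : s = i <;> simp [hsi]
      simp [this, mul_ite]
    simp only [hdiag]
    rw [← Finset.univ_sigma_univ, Finset.sum_sigma]
    simp only [map_sum, map_nsmul]
    congr 1
    ext l
    rw [Fintype.sum_prod_type]
    simp [Finset.sum_const, nsmul_eq_mul, Finset.mul_sum]
  have hmain : Λ₀ = ∑ l, r l • (∑ i, D l i i) := by
    rw [← sub_eq_zero, ← Module.forall_dual_apply_eq_zero_iff k]
    intro f
    rw [map_sub, hΛ, hkey, sub_self]
  refine ⟨hmain, ?_⟩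
  rw [hmain, ← Finset.add_sum_erase _ _ (Finset.mem_univ (0 : Fin m))]
  congr 1
  simp [hD0, Finset.sum_const, hr0]
end

section
/- Let H be a bialgebra over a field k, let C = (c_{ik}) ∈ M_r(H) be a multiplicative matrix, and let W = (w_1, …, w_r)^T ∈ M_{r×1}(H) be a column vector satisfying Δ(w_i) = Σ_{k=1}^r c_{ik} ⊗ w_k + w_i ⊗ 1_H for all 1 ≤ i ≤ r (i.e. W is a (C, 1)-primitive matrix). Then for every positive integer n, the column W^{[n]} obtained by applying the n-th Hopf power map entrywise to W satisfies W^{[n]} = (I_r + C + C^2 + ⋯ + C^{n−1})·W. -/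
open scoped TensorProduct

/-- The `n`-th Hopf power map `[n] = m_n ∘ Δ_n` of a bialgebra, defined recursively by
`h^[0] = ε(h)1`, `h^[n+1] = ∑ h₁ * (h₂)^[n]` (so that `h^[1] = h`). -/
noncomputable def hopfPow (k H : Type*) [CommSemiring k] [Semiring H] [Algebra k H]
    [CoalgebraStruct k H] : ℕ → H →ₗ[k] H
  | 0 => Algebra.linearMap k H ∘ₗ Coalgebra.counit
  | n + 1 => LinearMap.mul' k H ∘ₗ LinearMap.lTensor H (hopfPow k H n) ∘ₗ Coalgebra.comul

lemma hopfPow_one_right (k H : Type*) [CommSemiring k] [Semiring H] [Bialgebra k H]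
    (n : ℕ) : hopfPow k H n (1 : H) = 1 := by
  induction n with
  | zero => simp [hopfPow]
  | succ n ih =>
    simp [hopfPow, Algebra.TensorProduct.one_def, ih]

/-- **Statement 9.** Let `C` be a multiplicative `r × r` matrix over a bialgebra `H`, and let
`W = (w_1, …, w_r)ᵀ` be a column vector with `Δ(wᵢ) = ∑ l, c_{il} ⊗ w_l + wᵢ ⊗ 1` (a
`(C, 1)`-primitive matrix).  Then for every positive integer `n`, applying the `n`-th Hopf
power map entrywise to `W` gives `(I + C + C² + ⋯ + C^{n-1}) · W`. -/
theorem hopfPow_primitive_column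
    {k H : Type*} [Field k] [Ring H] [Bialgebra k H]
    {r : ℕ} (C : Matrix (Fin r) (Fin r) H) (hC : IsMultiplicativeMatrix k C)
    (W : Fin r → H)
    (hW : ∀ i, Coalgebra.comul (R := k) (W i) = (∑ l, C i l ⊗ₜ[k] W l) + W i ⊗ₜ[k] 1)
    (n : ℕ) (hn : 0 < n) :
    (fun i => hopfPow k H n (W i)) = (∑ i ∈ Finset.range n, C ^ i).mulVec W := by
  have heps : ∀ i, algebraMap k H (Coalgebra.counit (R := k) (W i)) = 0 := by
    intro i
    have h := Coalgebra.rTensor_counit_comul (R := k) (W i)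
    rw [hW i, map_add, map_sum] at h
    simp only [LinearMap.rTensor_tmul, hC.2] at h
    have hsum : (∑ x, ((if i = x then (1:k) else 0) ⊗ₜ[k] W x) : k ⊗[k] H)
        = 1 ⊗ₜ[k] W i := by
      rw [Finset.sum_eq_single i]
      · simp
      · intro b _ hb; simp [if_neg (Ne.symm hb)]
      · simp
    rw [hsum] at h
    have h3 : (Coalgebra.counit (R := k) (W i) ⊗ₜ[k] (1 : H) : k ⊗[k] H) = 0 :=
      add_eq_left.mp h
    have := congrArg (TensorProduct.lid k H) h3
    simpa [Algebra.algebraMap_eq_smul_one] using this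
  -- key recursion
  have hrec : ∀ m i, hopfPow k H (m + 1) (W i)
      = ∑ l, C i l * hopfPow k H m (W l) + W i := by
    intro m i
    simp [hopfPow, hW i, hopfPow_one_right, map_add, map_sum]
  induction n with
  | zero => omega
  | succ m ih =>
    rcases Nat.eq_zero_or_pos m with hm | hm
    · subst hm
      funext i
      rw [hrec 0 i]
      simp [hopfPow, heps, Matrix.one_mulVec]
    · have ihh := ih hm
      funext i
      rw [hrec m i]
      simp only [congrFun ihh]
      have hkey : ∑ x, C i x * ((∑ j ∈ Finset.range m, C ^ j).mulVec W) x
          = (C * ∑ j ∈ Finset.range m, C ^ j).mulVec W i := by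
        rw [← Matrix.mulVec_mulVec]; rfl
      rw [hkey]
      rw [geom_sum_succ (x := C) (n := m), Matrix.add_mulVec, Matrix.one_mulVec,
        Pi.add_apply]
end

section
/- Let k be a field of characteristic p > 0 and let H be a bialgebra over k. Let Z ∈ M_N(H) be a multiplicative matrix and let d, n be positive integers such that (Z^d − I_N)^{n+1} = 0 in the matrix ring M_N(H) (this holds, in particular, when Z is block upper triangular with n+1 diagonal blocks G_0, …, G_n satisfying G_0^d = ⋯ = G_n^d = I). Set m = ⌊log_p n⌋ + 1. Then Z^{d·p^m} = I_N, and the matrix obtained by applying the (d·p^m)-th Hopf power map entrywise to Z equals I_N; in particular, every entry of Z has trivial (d·p^m)-th Hopf power. -/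
open scoped TensorProduct

lemma map_hopfPow {k H : Type*} [Field k] [Ring H] [Bialgebra k H]
    {N : ℕ} (Z : Matrix (Fin N) (Fin N) H) (hZ : IsMultiplicativeMatrix k Z) (m : ℕ) :
    Z.map (fun x => hopfPow k H m x) = Z ^ m := by
  induction m with
  | zero =>
    ext i j
    simp only [Matrix.map_apply, hopfPow, LinearMap.coe_comp, Function.comp_apply, hZ.2 i j,
      pow_zero, Matrix.one_apply, Algebra.linearMap_apply]
    split <;> simp
  | succ m ih =>
    ext i j
    have : (Z ^ (m + 1)) i j = (Z * Z ^ m) i j := by rw [pow_succ']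
    rw [this, Matrix.mul_apply]
    simp only [Matrix.map_apply, hopfPow, LinearMap.coe_comp, Function.comp_apply, hZ.1 i j,
      map_sum, LinearMap.lTensor_tmul, LinearMap.mul'_apply]
    refine Finset.sum_congr rfl fun l _ => ?_
    have h2 : hopfPow k H m (Z l j) = (Z ^ m) l j := by
      have := congrFun (congrFun ih l) j
      simpa [Matrix.map_apply] using this
    rw [h2]

/-- Let `k` be a field of characteristic `p > 0`, `H` a `k`-bialgebra, and
`Z` a multiplicative `N × N` matrix over `H` with `(Z^d - I)^{n+1} = 0` for positive integers
`d, n` (as happens for block upper triangular `Z` with `n+1` diagonal blocks whose `d`-th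
powers are identity matrices).  With `m = ⌊log_p n⌋ + 1`, we have `Z^(d·p^m) = I`, the
entrywise `(d·p^m)`-th Hopf power of `Z` is the identity matrix, and in particular every entry
of `Z` has trivial `(d·p^m)`-th Hopf power. -/
theorem multiplicativeMatrix_unipotent_hopfPow_trivial
    {k H : Type*} [Field k] [Ring H] [Bialgebra k H]
    (p : ℕ) [CharP k p] (hp : p ≠ 0)
    {N : ℕ} (Z : Matrix (Fin N) (Fin N) H) (hZ : IsMultiplicativeMatrix k Z)
    (d n : ℕ) (hd : 0 < d) (hn : 0 < n)
    (hnil : (Z ^ d - 1) ^ (n + 1) = 0) :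
    Z ^ (d * p ^ (Nat.log p n + 1)) = 1 ∧
    Z.map (fun x => hopfPow k H (d * p ^ (Nat.log p n + 1)) x) = 1 ∧
    ∀ i j, hopfPow k H (d * p ^ (Nat.log p n + 1)) (Z i j) =
      Coalgebra.counit (R := k) (Z i j) • 1 := by
  have : NeZero p := ⟨hp⟩
  have hprime : Fact p.Prime := CharP.char_is_prime_of_pos k p
  have key : Z ^ (d * p ^ (Nat.log p n + 1)) = 1 := by
    rcases subsingleton_or_nontrivial H with hs | hnt
    · have : Subsingleton (Matrix (Fin N) (Fin N) H) := by infer_instance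
      exact Subsingleton.elim _ _
    rcases Nat.eq_zero_or_pos N with hN | hN
    · subst hN
      have : Subsingleton (Matrix (Fin 0) (Fin 0) H) := by
        constructor; intro a b; ext i j; exact i.elim0
      exact Subsingleton.elim _ _
    have : Nonempty (Fin N) := ⟨⟨0, hN⟩⟩
    have hH : CharP H p := charP_of_injective_ringHom (algebraMap k H).injective p
    have hM : CharP (Matrix (Fin N) (Fin N) H) p := by infer_instance
    set m := Nat.log p n + 1
    have hlt : n < p ^ m := Nat.lt_pow_succ_log_self hprime.out.one_lt n
    have hzero : (Z ^ d - 1) ^ p ^ m = 0 := by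
      have : p ^ m = (n + 1) + (p ^ m - (n + 1)) := by omega
      rw [this, pow_add, hnil, zero_mul]
    have := sub_pow_char_pow_of_commute p m (x := Z ^ d) (y := 1) (Commute.one_right _)
    rw [hzero, one_pow, ← pow_mul] at this
    have := sub_eq_zero.mp this.symm
    rw [← this]
  refine ⟨key, ?_, ?_⟩
  · rw [map_hopfPow Z hZ, key]
  · intro i j
    have h1 : Z.map (fun x => hopfPow k H (d * p ^ (Nat.log p n + 1)) x) = 1 := by
      rw [map_hopfPow Z hZ, key]
    have := congrFun (congrFun h1 i) j
    simp only [Matrix.map_apply] at this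
    rw [this, hZ.2 i j, Matrix.one_apply]
    split <;> simp
end

section
/- Let k be a field of characteristic p > 0, let H be a bialgebra over k, let d be a positive integer, let g, h ∈ H be grouplike elements with g^d = 1_H and h^d = 1_H, and let w ∈ H satisfy Δ(w) = g ⊗ w + w ⊗ h. Then w has trivial (d·p)-th Hopf power: w^{[dp]} = ε(w)·1_H = 0. -/
open scoped TensorProduct

/-- Let `k` be a field of characteristic `p > 0`, `H` a `k`-bialgebra, `d` a
positive integer, `g, h` grouplike elements with `g^d = 1` and `h^d = 1`, and `w` a
`(g, h)`-skew-primitive element (`Δ(w) = g ⊗ w + w ⊗ h`).  Then `w` has trivial `(d·p)`-th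
Hopf power: `w^[dp] = ε(w)·1 = 0`. -/
theorem skewPrimitive_hopfPow_trivial_charP
    {k H : Type*} [Field k] [Ring H] [Bialgebra k H]
    (p : ℕ) [CharP k p] (hp : p ≠ 0)
    (d : ℕ) (hd : 0 < d)
    (g h w : H)
    (hgΔ : Coalgebra.comul (R := k) g = g ⊗ₜ[k] g) (hgε : Coalgebra.counit (R := k) g = 1)
    (hhΔ : Coalgebra.comul (R := k) h = h ⊗ₜ[k] h) (hhε : Coalgebra.counit (R := k) h = 1)
    (hgd : g ^ d = 1) (hhd : h ^ d = 1)
    (hw : Coalgebra.comul (R := k) w = g ⊗ₜ[k] w + w ⊗ₜ[k] h) :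
    hopfPow k H (d * p) w = Coalgebra.counit (R := k) w • 1 ∧
    hopfPow k H (d * p) w = 0 := by
  -- unfolding lemmas for hopfPow
  have hpow0 : ∀ x : H, hopfPow k H 0 x = Coalgebra.counit (R := k) x • (1 : H) := by
    intro x
    simp [hopfPow, Algebra.algebraMap_eq_smul_one]
  have hpowsucc : ∀ (n : ℕ) (x : H), hopfPow k H (n + 1) x =
      (LinearMap.mul' k H) ((LinearMap.lTensor H (hopfPow k H n))
        (Coalgebra.comul (R := k) x)) := by
    intro n x; rfl
  -- hopfPow on the grouplike h
  have hh_pow : ∀ n : ℕ, hopfPow k H n h = h ^ n := by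
    intro n
    induction n with
    | zero => simp [hpow0, hhε]
    | succ n ih =>
      rw [hpowsucc, hhΔ, LinearMap.lTensor_tmul, LinearMap.mul'_apply, ih, ← pow_succ']
  -- ε(w) • 1 = 0
  have hεw : (Coalgebra.counit (R := k) w) • (1 : H) = 0 := by
    have h1 := Coalgebra.lTensor_counit_comul (R := k) w
    rw [hw, map_add, LinearMap.lTensor_tmul, LinearMap.lTensor_tmul, hhε] at h1
    have h2 : g ⊗ₜ[k] (Coalgebra.counit (R := k) w) = (0 : H ⊗[k] k) := by
      have := congrArg (fun t => t - w ⊗ₜ[k] (1 : k)) h1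
      simpa using this
    have h3 : (Coalgebra.counit (R := k) w) • g = 0 := by
      have := congrArg (TensorProduct.rid k H) h2
      simpa [TensorProduct.rid_tmul] using this
    calc (Coalgebra.counit (R := k) w) • (1 : H)
        = (Coalgebra.counit (R := k) w) • (g * g ^ (d - 1)) := by
          rw [← pow_succ', show d - 1 + 1 = d by omega, hgd]
      _ = ((Coalgebra.counit (R := k) w) • g) * g ^ (d - 1) := (smul_mul_assoc _ _ _).symm
      _ = 0 := by rw [h3, zero_mul]
  -- closed form for hopfPow n w
  have hw_pow : ∀ n : ℕ, hopfPow k H n w =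
      ∑ i ∈ Finset.range n, g ^ i * (w * h ^ (n - 1 - i)) := by
    intro n
    induction n with
    | zero => simp [hpow0, hεw]
    | succ n ih =>
      rw [hpowsucc, hw, map_add, map_add, LinearMap.lTensor_tmul, LinearMap.lTensor_tmul,
        LinearMap.mul'_apply, LinearMap.mul'_apply, ih, hh_pow]
      rw [Finset.sum_range_succ' (fun i => g ^ i * (w * h ^ (n + 1 - 1 - i))) n]
      rw [Finset.mul_sum]
      congr 1
      · apply Finset.sum_congr rfl
        intro i _
        rw [show n + 1 - 1 - (i + 1) = n - 1 - i by omega, pow_succ', mul_assoc]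
      · simp
  -- block sum
  set S : H := ∑ r ∈ Finset.range d, g ^ r * (w * h ^ (d - 1 - r)) with hS
  have hblock : ∀ m : ℕ, (∑ i ∈ Finset.range (d * m),
      g ^ i * (w * h ^ (d * m - 1 - i))) = m • S := by
    intro m
    induction m with
    | zero => simp
    | succ m ih =>
      have hdm : d * (m + 1) = d + d * m := by ring
      rw [hdm, Finset.sum_range_add]
      have e1 : (∑ i ∈ Finset.range d, g ^ i * (w * h ^ (d + d * m - 1 - i))) = S := by
        apply Finset.sum_congr rfl
        intro i hi
        have hi' : i < d := Finset.mem_range.mp hi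
        have : d + d * m - 1 - i = d * m + (d - 1 - i) := by omega
        rw [this, pow_add, pow_mul, hhd, one_pow, one_mul]
      have e2 : (∑ i ∈ Finset.range (d * m),
          g ^ (d + i) * (w * h ^ (d + d * m - 1 - (d + i)))) =
          ∑ i ∈ Finset.range (d * m), g ^ i * (w * h ^ (d * m - 1 - i)) := by
        apply Finset.sum_congr rfl
        intro i _
        rw [show d + d * m - 1 - (d + i) = d * m - 1 - i by omega, pow_add, hgd, one_mul]
      rw [e1, e2, ih, succ_nsmul', hS]
  -- conclude
  have hzero : hopfPow k H (d * p) w = 0 := by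
    rw [hw_pow, hblock p, ← Nat.cast_smul_eq_nsmul k p S, CharP.cast_eq_zero k p, zero_smul]
  exact ⟨by rw [hzero, hεw], hzero⟩
end

section
/- Let k be a field, let H be an associative unital k-algebra, let V be a k-vector space, and let H̄ = H ⊕ V be the direct sum of vector spaces. Let T(H) and T(H̄) denote the tensor algebras of the underlying vector spaces of H and H̄, let ι : T(H) → T(H̄) be the (injective) algebra homomorphism induced by the inclusion of vector spaces H ↪ H̄, and let π_H : T(H) → H be the unique algebra homomorphism satisfying π_H(h) = h for all h ∈ H ⊆ T(H) (so π_H(h_1 ⊗ ⋯ ⊗ h_l) = h_1 h_2 ⋯ h_l). Then the two-sided ideal of T(H̄) generated by ι(Ker π_H) intersects the image of ι exactly in ι(Ker π_H); that is, (T(H̄)·ι(Ker π_H)·T(H̄)) ∩ ι(T(H)) = ι(Ker π_H). -/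
/-- The algebra map `T(H) → T(H̄)` induced by the vector-space inclusion `H ↪ H̄ = H ⊕ V`. -/
noncomputable def tensorAlgebraIncl (k H V : Type*) [Field k] [Ring H] [Algebra k H]
    [AddCommGroup V] [Module k V] :
    TensorAlgebra k H →ₐ[k] TensorAlgebra k (H × V) :=
  TensorAlgebra.lift k ((TensorAlgebra.ι k).comp (LinearMap.inl k H V))

/-- The unique algebra map `π_H : T(H) → H` restricting to the identity on `H`,
`π_H (h₁ ⊗ ⋯ ⊗ h_l) = h₁h₂⋯h_l`. -/
noncomputable def tensorAlgebraMul (k H : Type*) [Field k] [Ring H] [Algebra k H] :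
    TensorAlgebra k H →ₐ[k] H :=
  TensorAlgebra.lift k (LinearMap.id : H →ₗ[k] H)

/-- The retraction `T(H̄) → T(H)` induced by the projection `H ⊕ V → H`. -/
noncomputable def tensorAlgebraRetr (k H V : Type*) [Field k] [Ring H] [Algebra k H]
    [AddCommGroup V] [Module k V] :
    TensorAlgebra k (H × V) →ₐ[k] TensorAlgebra k H :=
  TensorAlgebra.lift k ((TensorAlgebra.ι k).comp (LinearMap.fst k H V))

lemma tensorAlgebraRetr_comp_incl (k H V : Type*) [Field k] [Ring H] [Algebra k H]
    [AddCommGroup V] [Module k V] (x : TensorAlgebra k H) :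
    tensorAlgebraRetr k H V (tensorAlgebraIncl k H V x) = x := by
  have : (tensorAlgebraRetr k H V).comp (tensorAlgebraIncl k H V) = AlgHom.id k _ := by
    apply TensorAlgebra.hom_ext
    ext h
    simp [tensorAlgebraRetr, tensorAlgebraIncl]
  exact DFunLike.congr_fun this x

/-- **Statement 13.** Let `H` be a `k`-algebra, `V` a `k`-vector space, `H̄ = H ⊕ V`,
`ι : T(H) → T(H̄)` the algebra map induced by the inclusion, and `π_H : T(H) → H` the unique
algebra map with `π_H(h) = h` for `h ∈ H`.  Then the two-sided ideal of `T(H̄)` generated by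
`ι(Ker π_H)` meets the image of `ι` exactly in `ι(Ker π_H)`:
`(T(H̄)·ι(Ker π_H)·T(H̄)) ∩ ι(T(H)) = ι(Ker π_H)`. -/
theorem twoSidedIdeal_span_inter_range_tensorAlgebraIncl
    (k H V : Type*) [Field k] [Ring H] [Algebra k H] [AddCommGroup V] [Module k V] :
    (TwoSidedIdeal.span
        (⇑(tensorAlgebraIncl k H V) '' (RingHom.ker (tensorAlgebraMul k H) : Set (TensorAlgebra k H)))
        : Set (TensorAlgebra k (H × V)))
      ∩ Set.range (tensorAlgebraIncl k H V)
    = ⇑(tensorAlgebraIncl k H V) '' (RingHom.ker (tensorAlgebraMul k H) : Set (TensorAlgebra k H)) := by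
  set ι := tensorAlgebraIncl k H V
  set π := tensorAlgebraMul k H
  set g : TensorAlgebra k (H × V) →+* H :=
    ((π.comp (tensorAlgebraRetr k H V)) : TensorAlgebra k (H × V) →ₐ[k] H).toRingHom
  apply Set.Subset.antisymm
  · rintro x ⟨hxspan, y, rfl⟩
    refine ⟨y, ?_, rfl⟩
    have hsub : (⇑ι '' (RingHom.ker π : Set (TensorAlgebra k H))) ⊆ (TwoSidedIdeal.ker g : Set _) := by
      rintro _ ⟨a, ha, rfl⟩
      rw [SetLike.mem_coe, TwoSidedIdeal.mem_ker]
      have : g (ι a) = π a := by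
        simp only [ι, g, AlgHom.toRingHom_eq_coe, RingHom.coe_coe, AlgHom.coe_comp,
          Function.comp_apply, tensorAlgebraRetr_comp_incl]
      rw [this]
      exact ha
    have hx : ι y ∈ TwoSidedIdeal.ker g :=
      TwoSidedIdeal.mem_span_iff.mp hxspan _ hsub
    rw [TwoSidedIdeal.mem_ker] at hx
    have : g (ι y) = π y := by simp only [ι, g, AlgHom.toRingHom_eq_coe, RingHom.coe_coe, AlgHom.coe_comp,
          Function.comp_apply, tensorAlgebraRetr_comp_incl]
    rw [this] at hx
    exact hx
  · intro x hx
    exact ⟨TwoSidedIdeal.subset_span hx, by rcases hx with ⟨a, _, rfl⟩; exact ⟨a, rfl⟩⟩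
end
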